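/- Suppose at time $t^-$ the follower in the target lane has local density $\rho^- \in (0, 1/2)$ and the changing vehicle has current-lane density $\rho_j \in (0,1]$, with $\lambda = 1 - \rho_j$ and insertion at the convex-combination position. Then the new density $\rho^+ = \rho^- + A(\rho_j, \rho^-)\rho^-$ satisfies $\rho^- < \rho^+ = \rho^- /((1-\rho_j)(1-\rho^-) + \rho_j\rho^-) \le 1$, i.e. the post-change density strictly increases but does not exceed the maximum density. -/

import Mathlib

theorem post_change_density_bounds (ρj ρm : ℝ)
    (hρj : ρj ∈ Set.Ioc (0:ℝ) 1) (hρm : ρm ∈ Set.Ioo (0:ℝ) (1/2)) :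
    let A : ℝ := ((1 - ρj) + (2 * ρj - 1) * ρm)⁻¹ - 1
    let ρp : ℝ := ρm + A * ρm
    ρm < ρp ∧ ρp = ρm / ((1 - ρj) * (1 - ρm) + ρj * ρm) ∧ ρp ≤ 1 := by
  obtain ⟨hj0, hj1⟩ := hρj
  obtain ⟨hm0, hm1⟩ := hρm
  intro A ρp
  have hD : (0:ℝ) < (1 - ρj) + (2 * ρj - 1) * ρm := by nlinarith
  have hD1 : (1 - ρj) + (2 * ρj - 1) * ρm < 1 := by nlinarith
  have hEq : ρp = ρm / ((1 - ρj) * (1 - ρm) + ρj * ρm) := by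
    show ρm + (((1 - ρj) + (2 * ρj - 1) * ρm)⁻¹ - 1) * ρm
        = ρm / ((1 - ρj) * (1 - ρm) + ρj * ρm)
    rw [eq_div_iff (by nlinarith)]
    have hD' : (1 - ρj) + (2 * ρj - 1) * ρm ≠ 0 := hD.ne'
    linear_combination ρm * inv_mul_cancel₀ hD'
  refine ⟨?_, hEq, ?_⟩
  · show ρm < ρm + (((1 - ρj) + (2 * ρj - 1) * ρm)⁻¹ - 1) * ρm
    have : (1:ℝ) < ((1 - ρj) + (2 * ρj - 1) * ρm)⁻¹ := by
      rw [lt_inv_comm₀ one_pos hD]; simpa using hD1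
    nlinarith
  · rw [hEq, div_le_one (by nlinarith)]
    nlinarith
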